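/- Let M ∈ ℝ^{m×n} have unit-norm columns and satisfy the RIP of order 2k with constant δ ∈ (0,1). Let x ∈ ℝⁿ have support L with |L| = k, let y₀ = Mx ≠ 0, let w ∈ ℝᵐ, and let y = y₀ + w. Let T ⊆ {1,…,n} with |T| = k and T ∩ L = ∅. Then there exists an index i ∈ L such that |⟨R_T m_(i), y⟩| / ‖R_T m_(i)‖ ≥ √(c_δ(1−δ²)/k)·‖y₀‖ − |⟨R_T m_(i), w⟩| / ‖R_T m_(i)‖, where c_δ = (1−δ²)(1−δ). -/

import Mathlib

open Matrix

noncomputable section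

/-- `M` satisfies the RIP of order `s` with constant `δ` if
`(1−δ)‖v‖² ≤ ‖Mv‖² ≤ (1+δ)‖v‖²` for every `v` with at most `s` nonzero entries. -/
def RIP {m n : ℕ} (M : Matrix (Fin m) (Fin n) ℝ) (s : ℕ) (δ : ℝ) : Prop :=
  ∀ v : Fin n → ℝ, (∃ S : Finset (Fin n), S.card ≤ s ∧ ∀ i ∉ S, v i = 0) →
    (1 - δ) * (v ⬝ᵥ v) ≤ (M *ᵥ v) ⬝ᵥ (M *ᵥ v) ∧
      (M *ᵥ v) ⬝ᵥ (M *ᵥ v) ≤ (1 + δ) * (v ⬝ᵥ v)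

/-- `M_T`: the submatrix of `M` of the columns indexed by `T`. -/
def colsOf {m n : ℕ} (M : Matrix (Fin m) (Fin n) ℝ) (T : Finset (Fin n)) :
    Matrix (Fin m) {i // i ∈ T} ℝ :=
  M.submatrix id fun j => (j : Fin n)

/-- `P_T = M_T (M_TᵀM_T)⁻¹ M_Tᵀ`. -/
def projT {m n : ℕ} (M : Matrix (Fin m) (Fin n) ℝ) (T : Finset (Fin n)) :
    Matrix (Fin m) (Fin m) ℝ :=
  colsOf M T * ((colsOf M T)ᵀ * colsOf M T)⁻¹ * (colsOf M T)ᵀ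

/-- `R_T = I − P_T`. -/
def residT {m n : ℕ} (M : Matrix (Fin m) (Fin n) ℝ) (T : Finset (Fin n)) :
    Matrix (Fin m) (Fin m) ℝ :=
  1 - projT M T

/-- The Euclidean norm of a vector. -/
def nrm {ι : Type} [Fintype ι] (v : ι → ℝ) : ℝ := Real.sqrt (v ⬝ᵥ v)

/-- Extend a vector indexed by `T` to `Fin n` by zero. -/
def extT {n : ℕ} (T : Finset (Fin n)) (u : {i // i ∈ T} → ℝ) : Fin n → ℝ :=
  fun j => if h : j ∈ T then u ⟨j, h⟩ else 0

lemma extT_zero_off {n : ℕ} (T : Finset (Fin n)) (u : {i // i ∈ T} → ℝ) :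
    ∀ j ∉ T, extT T u j = 0 := fun j hj => dif_neg hj

lemma mulVec_extT {m n : ℕ} (M : Matrix (Fin m) (Fin n) ℝ) (T : Finset (Fin n))
    (u : {i // i ∈ T} → ℝ) : M *ᵥ extT T u = colsOf M T *ᵥ u := by
  funext r
  show (fun j => M r j) ⬝ᵥ extT T u = _
  simp only [mulVec, dotProduct, colsOf, submatrix_apply, id]
  rw [← Finset.sum_subset (Finset.subset_univ T)
    (fun j _ hj => by rw [extT_zero_off T u j hj, mul_zero])]
  rw [← Finset.sum_attach T fun j => M r j * extT T u j]
  refine Finset.sum_congr rfl fun i _ => ?_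
  rw [extT, dif_pos i.2]

lemma dot_extT {n : ℕ} (T : Finset (Fin n)) (u : {i // i ∈ T} → ℝ) :
    extT T u ⬝ᵥ extT T u = u ⬝ᵥ u := by
  simp only [dotProduct]
  rw [← Finset.sum_subset (Finset.subset_univ T)
    (fun j _ hj => by rw [extT_zero_off T u j hj, mul_zero])]
  rw [← Finset.sum_attach T fun j => extT T u j * extT T u j]
  refine Finset.sum_congr rfl fun i _ => ?_
  rw [extT, dif_pos i.2]

lemma dot_self_nonneg {ι : Type*} [Fintype ι] (v : ι → ℝ) : 0 ≤ v ⬝ᵥ v :=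
  Finset.sum_nonneg fun i _ => mul_self_nonneg (v i)

lemma dot_self_pos {ι : Type*} [Fintype ι] {v : ι → ℝ} (hv : v ≠ 0) : 0 < v ⬝ᵥ v :=
  lt_of_le_of_ne (dot_self_nonneg v) (fun h => hv (dotProduct_self_eq_zero.mp h.symm))

lemma gram_isUnit {m n : ℕ} {M : Matrix (Fin m) (Fin n) ℝ} {s : ℕ} {δ : ℝ}
    (hδ1 : δ < 1) (hRIP : RIP M s δ) (T : Finset (Fin n)) (hTs : T.card ≤ s) :
    IsUnit ((colsOf M T)ᵀ * colsOf M T).det := by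
  have hpd : ((colsOf M T)ᵀ * colsOf M T).PosDef := by
    rw [posDef_iff_dotProduct_mulVec]
    constructor
    · have := isHermitian_conjTranspose_mul_self (colsOf M T)
      simpa [Matrix.conjTranspose_eq_transpose_of_trivial] using this
    · intro u hu
      have hext : extT T u ≠ 0 := by
        intro h
        apply hu
        funext i
        have := congrFun h (i : Fin n)
        rwa [extT, dif_pos i.2] at this
      have hR := (hRIP (extT T u) ⟨T, hTs, extT_zero_off T u⟩).1
      rw [mulVec_extT, dot_extT] at hR
      have h1 : 0 < (1 - δ) * (u ⬝ᵥ u) := by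
        have h2 := dot_self_pos hext
        rw [dot_extT] at h2
        exact mul_pos (by linarith) h2
      have : star u ⬝ᵥ (((colsOf M T)ᵀ * colsOf M T) *ᵥ u) =
          (colsOf M T *ᵥ u) ⬝ᵥ (colsOf M T *ᵥ u) := by
        rw [star_trivial, ← mulVec_mulVec, dotProduct_mulVec, vecMul_transpose]
      rw [this]
      linarith
  exact (Matrix.isUnit_iff_isUnit_det _).mp hpd.isUnit

section ProjLemmas
variable {m n : ℕ} (M : Matrix (Fin m) (Fin n) ℝ) (T : Finset (Fin n))

lemma projT_symm : (projT M T)ᵀ = projT M T := by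
  have hGs : ((colsOf M T)ᵀ * colsOf M T)ᵀ = (colsOf M T)ᵀ * colsOf M T := by
    rw [transpose_mul, transpose_transpose]
  rw [projT, transpose_mul, transpose_mul, transpose_transpose,
    transpose_nonsing_inv, hGs, Matrix.mul_assoc]

lemma projT_idem (hdet : IsUnit ((colsOf M T)ᵀ * colsOf M T).det) :
    projT M T * projT M T = projT M T := by
  have h1 : ((colsOf M T)ᵀ * colsOf M T)⁻¹ * ((colsOf M T)ᵀ * colsOf M T) = 1 :=
    nonsing_inv_mul _ hdet
  rw [projT]
  calc colsOf M T * ((colsOf M T)ᵀ * colsOf M T)⁻¹ * (colsOf M T)ᵀ *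
        (colsOf M T * ((colsOf M T)ᵀ * colsOf M T)⁻¹ * (colsOf M T)ᵀ)
      = colsOf M T * ((((colsOf M T)ᵀ * colsOf M T)⁻¹ * ((colsOf M T)ᵀ * colsOf M T)) *
          (((colsOf M T)ᵀ * colsOf M T)⁻¹ * (colsOf M T)ᵀ)) := by
        simp only [Matrix.mul_assoc]
    _ = colsOf M T * ((colsOf M T)ᵀ * colsOf M T)⁻¹ * (colsOf M T)ᵀ := by
        rw [h1, Matrix.one_mul, Matrix.mul_assoc]

lemma residT_symm : (residT M T)ᵀ = residT M T := by
  rw [residT, transpose_sub, transpose_one, projT_symm]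

lemma residT_idem (hdet : IsUnit ((colsOf M T)ᵀ * colsOf M T).det) :
    residT M T * residT M T = residT M T := by
  rw [residT, Matrix.sub_mul, Matrix.one_mul, Matrix.mul_sub, Matrix.mul_one,
    projT_idem M T hdet]
  abel

lemma dot_symm_mat {A : Matrix (Fin m) (Fin m) ℝ} (hA : Aᵀ = A) (a b : Fin m → ℝ) :
    (A *ᵥ a) ⬝ᵥ b = a ⬝ᵥ (A *ᵥ b) := by
  rw [dotProduct_mulVec, ← mulVec_transpose, hA]

lemma pythag (hdet : IsUnit ((colsOf M T)ᵀ * colsOf M T).det) (z : Fin m → ℝ) :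
    (residT M T *ᵥ z) ⬝ᵥ (residT M T *ᵥ z) + (projT M T *ᵥ z) ⬝ᵥ (projT M T *ᵥ z) = z ⬝ᵥ z := by
  set P := projT M T with hP
  have hpp : (P *ᵥ z) ⬝ᵥ (P *ᵥ z) = z ⬝ᵥ (P *ᵥ z) := by
    rw [dot_symm_mat (projT_symm M T), mulVec_mulVec, projT_idem M T hdet]
  have hRz : residT M T *ᵥ z = z - P *ᵥ z := by
    rw [residT, Matrix.sub_mulVec, Matrix.one_mulVec]
  have hcomm : (P *ᵥ z) ⬝ᵥ z = z ⬝ᵥ (P *ᵥ z) := dotProduct_comm _ _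
  rw [hRz, dotProduct_sub, sub_dotProduct, sub_dotProduct]
  linarith

lemma projT_mulVec (z : Fin m → ℝ) :
    projT M T *ᵥ z =
      colsOf M T *ᵥ (((colsOf M T)ᵀ * colsOf M T)⁻¹ *ᵥ ((colsOf M T)ᵀ *ᵥ z)) := by
  simp only [mulVec_mulVec, projT, Matrix.mul_assoc]

end ProjLemmas

lemma scalar0 {δ a2 A2 ρ2 p2 U : ℝ} (hδ0 : 0 < δ) (hδ1 : δ < 1)
    (hRv : (1 - δ) * (a2 + U) ≤ ρ2) (hRu : p2 ≤ (1 + δ) * U)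
    (hpyth : ρ2 + p2 = A2) : (1 - δ ^ 2) * a2 + (1 - δ) * A2 ≤ 2 * ρ2 := by
  nlinarith [mul_le_mul_of_nonneg_left hRu (by linarith : (0:ℝ) ≤ 1 - δ),
    mul_le_mul_of_nonneg_left hRv (by linarith : (0:ℝ) ≤ 1 + δ)]

lemma scalar1 {δ a2 A2 ρ2 a A s t : ℝ} (hδ0 : 0 < δ) (hδ1 : δ < 1)
    (hasq : a ^ 2 = a2) (hAsq : A ^ 2 = A2) (hssq : s ^ 2 = 1 - δ)
    (htsq : t ^ 2 = 1 - δ ^ 2) (hann : 0 ≤ a) (hAnn : 0 ≤ A) (hsnn : 0 ≤ s)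
    (htnn : 0 ≤ t) (ht1 : t ≤ 1)
    (hF6 : (1 - δ ^ 2) * a2 + (1 - δ) * A2 ≤ 2 * ρ2) :
    (1 - δ ^ 2) * s * A * a ≤ ρ2 := by
  have h1 : 2 * (t * s * a * A) ≤ 2 * ρ2 := by nlinarith [sq_nonneg (t * a - s * A)]
  have h2 : (1 - δ ^ 2) * (s * a * A) ≤ t * (s * a * A) := by
    have h3 : 1 - δ ^ 2 ≤ t := by nlinarith
    exact mul_le_mul_of_nonneg_right h3 (by positivity)
  nlinarith

theorem stmt12 {m n k : ℕ} (M : Matrix (Fin m) (Fin n) ℝ) (δ : ℝ)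
    (hδ0 : 0 < δ) (hδ1 : δ < 1)
    (hunit : ∀ j : Fin n, (fun r => M r j) ⬝ᵥ (fun r => M r j) = 1)
    (hRIP : RIP M (2 * k) δ)
    (x : Fin n → ℝ) (L : Finset (Fin n)) (hsupp : ∀ i, x i ≠ 0 ↔ i ∈ L)
    (hL : L.card = k)
    (y0 : Fin m → ℝ) (hy0 : y0 = M *ᵥ x) (hy0ne : y0 ≠ 0)
    (w : Fin m → ℝ) (y : Fin m → ℝ) (hy : y = y0 + w)
    (T : Finset (Fin n)) (hT : T.card = k) (hdisj : Disjoint T L)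
    (cδ : ℝ) (hcδ : cδ = (1 - δ ^ 2) * (1 - δ)) :
    ∃ i ∈ L,
      |(residT M T *ᵥ fun r => M r i) ⬝ᵥ y| /
          nrm (residT M T *ᵥ fun r => M r i) ≥
        Real.sqrt (cδ * (1 - δ ^ 2) / (k : ℝ)) * nrm y0 -
          |(residT M T *ᵥ fun r => M r i) ⬝ᵥ w| /
            nrm (residT M T *ᵥ fun r => M r i) := by
  subst hcδ hy hy0
  have hδm : (0:ℝ) < 1 - δ := by linarith
  have hδp : (0:ℝ) < 1 + δ := by linarith
  have hδ2 : (0:ℝ) < 1 - δ ^ 2 := by nlinarith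
  have hdet : IsUnit ((colsOf M T)ᵀ * colsOf M T).det :=
    gram_isUnit hδ1 hRIP T (by rw [hT]; omega)
  have hxne : x ≠ 0 := by rintro rfl; simp at hy0ne
  have ha2 : 0 < x ⬝ᵥ x := dot_self_pos hxne
  have hxsupp : ∀ i ∉ L, x i = 0 := fun i hi => by
    by_contra h; exact hi ((hsupp i).mp h)
  set z : Fin m → ℝ := M *ᵥ x with hzdef
  set u : {i // i ∈ T} → ℝ := ((colsOf M T)ᵀ * colsOf M T)⁻¹ *ᵥ ((colsOf M T)ᵀ *ᵥ z)
    with hudef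
  have hPz : projT M T *ᵥ z = M *ᵥ extT T u := by
    rw [projT_mulVec, mulVec_extT]
  have hRx := hRIP x ⟨L, by rw [hL]; omega, hxsupp⟩
  have hRu := (hRIP (extT T u) ⟨T, by rw [hT]; omega, extT_zero_off T u⟩).2
  rw [dot_extT, ← hPz] at hRu
  have hvsupp : ∀ j ∉ L ∪ T, (x - extT T u) j = 0 := by
    intro j hj
    rw [Finset.mem_union, not_or] at hj
    simp [Pi.sub_apply, hxsupp j hj.1, extT_zero_off T u j hj.2]
  have hRv := (hRIP (x - extT T u) ⟨L ∪ T,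
    le_trans (Finset.card_union_le L T) (by rw [hL, hT]; omega), hvsupp⟩).1
  have hMv : M *ᵥ (x - extT T u) = residT M T *ᵥ z := by
    rw [Matrix.mulVec_sub, ← hPz, residT, Matrix.sub_mulVec, Matrix.one_mulVec]
  rw [hMv] at hRv
  have hcross : x ⬝ᵥ extT T u = 0 := by
    apply Finset.sum_eq_zero
    intro j _
    by_cases hjT : j ∈ T
    · rw [hxsupp j (Finset.disjoint_left.mp hdisj hjT), zero_mul]
    · rw [extT_zero_off T u j hjT, mul_zero]
  have hvv : (x - extT T u) ⬝ᵥ (x - extT T u) = x ⬝ᵥ x + u ⬝ᵥ u := by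
    have h2 : extT T u ⬝ᵥ x = 0 := by rw [dotProduct_comm]; exact hcross
    rw [dotProduct_sub, sub_dotProduct, sub_dotProduct, hcross, h2, dot_extT]
    ring
  rw [hvv] at hRv
  have hpyth := pythag M T hdet z
  set a2 := x ⬝ᵥ x with ha2def
  set A2 := z ⬝ᵥ z with hA2def
  set ρ2 := (residT M T *ᵥ z) ⬝ᵥ (residT M T *ᵥ z) with hρ2def
  set p2 := (projT M T *ᵥ z) ⬝ᵥ (projT M T *ᵥ z) with hp2def
  set U := u ⬝ᵥ u with hUdef
  have hUnn : 0 ≤ U := dot_self_nonneg u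
  have hρpos : 0 < ρ2 := lt_of_lt_of_le (mul_pos hδm (by linarith)) hRv
  have hF6 : (1 - δ ^ 2) * a2 + (1 - δ) * A2 ≤ 2 * ρ2 := scalar0 hδ0 hδ1 hRv hRu hpyth
  set a := Real.sqrt a2 with hadef
  set A := Real.sqrt A2 with hAdef
  set s := Real.sqrt (1 - δ) with hsdef
  set t := Real.sqrt (1 - δ ^ 2) with htdef
  have hA2nn : 0 ≤ A2 := dot_self_nonneg z
  have hasq : a ^ 2 = a2 := Real.sq_sqrt ha2.le
  have hAsq : A ^ 2 = A2 := Real.sq_sqrt hA2nn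
  have hssq : s ^ 2 = 1 - δ := Real.sq_sqrt hδm.le
  have htsq : t ^ 2 = 1 - δ ^ 2 := Real.sq_sqrt hδ2.le
  have hann : 0 ≤ a := Real.sqrt_nonneg _
  have hAnn : 0 ≤ A := Real.sqrt_nonneg _
  have hsnn : 0 ≤ s := Real.sqrt_nonneg _
  have htnn : 0 ≤ t := Real.sqrt_nonneg _
  have hapos : 0 < a := Real.sqrt_pos.mpr ha2
  have ht1 : t ≤ 1 := Real.sqrt_le_one.mpr (by nlinarith)
  have hF7 : (1 - δ ^ 2) * s * A * a ≤ ρ2 :=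
    scalar1 hδ0 hδ1 hasq hAsq hssq htsq hann hAnn hsnn htnn ht1 hF6
  set c : Fin n → ℝ := fun i => (residT M T *ᵥ fun r => M r i) ⬝ᵥ z with hcdef
  have hMq : ∀ q : Fin m → ℝ, (M *ᵥ x) ⬝ᵥ q = ∑ j : Fin n, x j * ((fun r => M r j) ⬝ᵥ q) := by
    intro q
    simp only [dotProduct, mulVec, Finset.sum_mul, Finset.mul_sum]
    rw [Finset.sum_comm]
    exact Finset.sum_congr rfl fun j _ => Finset.sum_congr rfl fun r _ => by ring
  have hsum : ∑ i ∈ L, x i * c i = ρ2 := by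
    calc ∑ i ∈ L, x i * c i
        = ∑ i ∈ L, x i * ((fun r => M r i) ⬝ᵥ (residT M T *ᵥ z)) := by
          refine Finset.sum_congr rfl fun i _ => ?_
          simp only [hcdef]
          rw [dot_symm_mat (residT_symm M T)]
      _ = ∑ j : Fin n, x j * ((fun r => M r j) ⬝ᵥ (residT M T *ᵥ z)) := by
          refine Finset.sum_subset (Finset.subset_univ L) ?_
          intro j _ hj; rw [hxsupp j hj, zero_mul]
      _ = (M *ᵥ x) ⬝ᵥ (residT M T *ᵥ z) := (hMq _).symm
      _ = z ⬝ᵥ (residT M T *ᵥ z) := by rw [hzdef]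
      _ = ρ2 := by
          have hRR : residT M T *ᵥ (residT M T *ᵥ z) = residT M T *ᵥ z := by
            calc residT M T *ᵥ (residT M T *ᵥ z)
                = (residT M T * residT M T) *ᵥ z := mulVec_mulVec z _ _
              _ = residT M T *ᵥ z := by rw [residT_idem M T hdet]
          rw [hρ2def, dot_symm_mat (residT_symm M T) z (residT M T *ᵥ z), hRR]
  have hLne : L.Nonempty := by
    obtain ⟨i, hi⟩ := Function.ne_iff.mp hxne
    exact ⟨i, (hsupp i).mp hi⟩
  have hk : 0 < k := hL ▸ Finset.card_pos.mpr hLne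
  set K := Real.sqrt k with hKdef
  have hKpos : 0 < K := Real.sqrt_pos.mpr (by exact_mod_cast hk)
  obtain ⟨i0, hi0L, hmax⟩ := Finset.exists_max_image L (fun i => |c i|) hLne
  have hxl1 : ∑ i ∈ L, |x i| ≤ a * K := by
    have hdot : a2 = ∑ i : Fin n, x i ^ 2 := by
      rw [ha2def]; simp [dotProduct, sq]
    have hsub : ∑ i ∈ L, x i ^ 2 ≤ a2 := by
      rw [hdot]
      exact Finset.sum_le_sum_of_subset_of_nonneg (Finset.subset_univ L)
        fun i _ _ => sq_nonneg _
    have hcs2 : (∑ i ∈ L, |x i|) ^ 2 ≤ a2 * k := by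
      calc (∑ i ∈ L, |x i|) ^ 2 = (∑ i ∈ L, |x i| * 1) ^ 2 := by simp
        _ ≤ (∑ i ∈ L, |x i| ^ 2) * (∑ i ∈ L, (1:ℝ) ^ 2) :=
            Finset.sum_mul_sq_le_sq_mul_sq L _ _
        _ = (∑ i ∈ L, x i ^ 2) * k := by simp [sq_abs, hL]
        _ ≤ a2 * k := mul_le_mul_of_nonneg_right hsub (by positivity)
    have h1 : ∑ i ∈ L, |x i| = Real.sqrt ((∑ i ∈ L, |x i|) ^ 2) :=
      (Real.sqrt_sq (Finset.sum_nonneg fun i _ => abs_nonneg _)).symm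
    rw [h1]
    calc Real.sqrt ((∑ i ∈ L, |x i|) ^ 2) ≤ Real.sqrt (a2 * k) := Real.sqrt_le_sqrt hcs2
      _ = a * K := Real.sqrt_mul ha2.le k
  have hρle : ρ2 ≤ |c i0| * (a * K) := by
    calc ρ2 = ∑ i ∈ L, x i * c i := hsum.symm
      _ ≤ ∑ i ∈ L, |x i * c i| := Finset.sum_le_sum fun i _ => le_abs_self _
      _ = ∑ i ∈ L, |x i| * |c i| := by
          exact Finset.sum_congr rfl fun i _ => abs_mul _ _
      _ ≤ ∑ i ∈ L, |x i| * |c i0| := Finset.sum_le_sum fun i hi =>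
            mul_le_mul_of_nonneg_left (hmax i hi) (abs_nonneg _)
      _ = (∑ i ∈ L, |x i|) * |c i0| := by rw [← Finset.sum_mul]
      _ ≤ (a * K) * |c i0| := mul_le_mul_of_nonneg_right hxl1 (abs_nonneg _)
      _ = |c i0| * (a * K) := mul_comm _ _
  have hc0pos : 0 < |c i0| := by
    by_contra hcon
    push_neg at hcon
    have h0 : |c i0| = 0 := le_antisymm hcon (abs_nonneg _)
    rw [h0, zero_mul] at hρle
    exact absurd (lt_of_lt_of_le hρpos hρle) (lt_irrefl 0)
  have hcbound : Real.sqrt ((1 - δ ^ 2) * (1 - δ) * (1 - δ ^ 2) / k) * A ≤ |c i0| := by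
    have htar : Real.sqrt ((1 - δ ^ 2) * (1 - δ) * (1 - δ ^ 2) / k) = (1 - δ ^ 2) * s / K := by
      rw [show (1 - δ ^ 2) * (1 - δ) * (1 - δ ^ 2) / (k:ℝ)
            = (1 - δ ^ 2) ^ 2 * (1 - δ) / k by ring,
        Real.sqrt_div (by positivity), Real.sqrt_mul (by positivity), Real.sqrt_sq hδ2.le]
    rw [htar, div_mul_eq_mul_div, div_le_iff₀ hKpos]
    have h1 : ((1 - δ ^ 2) * s * A) * a ≤ (|c i0| * K) * a := by
      have h2 := le_trans hF7 hρle
      linarith [h2]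
    exact le_of_mul_le_mul_right h1 hapos
  refine ⟨i0, hi0L, ?_⟩
  set v0 : Fin m → ℝ := residT M T *ᵥ (fun r => M r i0) with hv0def
  have hcv : c i0 = v0 ⬝ᵥ z := by simp only [hcdef, hv0def]
  have hv0ne : v0 ≠ 0 := by
    intro h
    rw [hcv, h, zero_dotProduct] at hc0pos
    simp at hc0pos
  have hN2pos : 0 < v0 ⬝ᵥ v0 := dot_self_pos hv0ne
  have hNdef : nrm v0 = Real.sqrt (v0 ⬝ᵥ v0) := rfl
  have hNpos : 0 < nrm v0 := by rw [hNdef]; exact Real.sqrt_pos.mpr hN2pos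
  have hN1 : nrm v0 ≤ 1 := by
    have hp := pythag M T hdet (fun r => M r i0)
    rw [hunit i0, ← hv0def] at hp
    have h1 : v0 ⬝ᵥ v0 ≤ 1 := by
      linarith [dot_self_nonneg (projT M T *ᵥ (fun r => M r i0))]
    rw [hNdef]; exact Real.sqrt_le_one.mpr h1
  have hnz : nrm z = A := by rw [hAdef, hA2def]; rfl
  have hsplitabs : |c i0| ≤ |v0 ⬝ᵥ (z + w)| + |v0 ⬝ᵥ w| := by
    have h1 : c i0 = v0 ⬝ᵥ (z + w) - v0 ⬝ᵥ w := by rw [hcv, dotProduct_add]; ring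
    rw [h1]; exact abs_sub _ _
  have step2 : (|c i0| - |v0 ⬝ᵥ w|) / nrm v0 ≤ |v0 ⬝ᵥ (z + w)| / nrm v0 := by
    gcongr
    linarith
  have step3 : |c i0| ≤ |c i0| / nrm v0 := by
    rw [le_div_iff₀ hNpos]
    exact le_trans (mul_le_mul_of_nonneg_left hN1 (abs_nonneg _)) (le_of_eq (mul_one _))
  have step4 : (|c i0| - |v0 ⬝ᵥ w|) / nrm v0 = |c i0| / nrm v0 - |v0 ⬝ᵥ w| / nrm v0 :=
    sub_div _ _ _
  rw [ge_iff_le, hnz]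
  linarith
end
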